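/- Let X be a random variable on a finite alphabet 𝒳 with |𝒳| ≥ 2, and let x₀ ∈ 𝒳 be fixed. If H(X) ≥ h_δ + δ·log₂(|𝒳|−1) where h_δ is the binary entropy of δ ∈ (0, 1−1/|𝒳|], then P(X ≠ x₀) ≥ δ. -/

import Mathlib

open scoped Classical

/-- Distribution of a random variable `f` on a finite probability space with pmf `P`. -/
noncomputable def distOf {Ω α : Type*} [Fintype Ω] [Fintype α]
    (P : Ω → ℝ) (f : Ω → α) (a : α) : ℝ :=
  ∑ ω ∈ Finset.univ.filter (fun ω => f ω = a), P ω

/-- Shannon entropy (in bits) of a random variable `f` on a finite probability space. -/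
noncomputable def entOf {Ω α : Type*} [Fintype Ω] [Fintype α]
    (P : Ω → ℝ) (f : Ω → α) : ℝ :=
  -∑ a, distOf P f a * Real.logb 2 (distOf P f a)

/-- Per-term Gibbs inequality. -/
lemma gibbs_term {x y : ℝ} (hx : 0 ≤ x) (hy : 0 ≤ y) (h : y = 0 → x = 0) :
    x * Real.log y - x * Real.log x ≤ y - x := by
  rcases eq_or_lt_of_le hx with h0 | hx
  · simp [← h0, hy]
  rcases eq_or_lt_of_le hy with h0y | hy
  · exact absurd (h h0y.symm) hx.ne'
  · have hlog := Real.log_le_sub_one_of_pos (show 0 < y / x from div_pos hy hx)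
    rw [Real.log_div hy.ne' hx.ne'] at hlog
    have := mul_le_mul_of_nonneg_left hlog hx.le
    have hxy : x * (y / x) = y := by field_simp
    nlinarith

lemma qaryEntropy_expand (M : ℕ) (t : ℝ) :
    Real.qaryEntropy M t
      = t * Real.log ((M : ℝ) - 1) - t * Real.log t - (1 - t) * Real.log (1 - t) := by
  unfold Real.qaryEntropy Real.binEntropy
  rw [Real.log_inv, Real.log_inv]
  push_cast
  ring

/-- Fano-type converse: If `|𝒳| ≥ 2`, `δ ∈ (0, 1 − 1/|𝒳|]`, and
`H(X) ≥ h(δ) + δ·log₂(|𝒳|−1)`, then `P(X ≠ x₀) ≥ δ`. -/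
theorem fano_converse {Ω 𝒳 : Type*} [Fintype Ω] [Fintype 𝒳]
    (hcard : 2 ≤ Fintype.card 𝒳)
    (P : Ω → ℝ) (hP : ∀ ω, 0 ≤ P ω) (hPsum : ∑ ω, P ω = 1)
    (X : Ω → 𝒳) (x₀ : 𝒳) (δ : ℝ) (hδ0 : 0 < δ)
    (hδ1 : δ ≤ 1 - 1 / (Fintype.card 𝒳 : ℝ))
    (hent : entOf P X ≥
      (-δ * Real.logb 2 δ - (1 - δ) * Real.logb 2 (1 - δ))
        + δ * Real.logb 2 ((Fintype.card 𝒳 : ℝ) - 1)) :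
    ∑ ω ∈ Finset.univ.filter (fun ω => X ω ≠ x₀), P ω ≥ δ := by
  set M := Fintype.card 𝒳 with hM
  set q : 𝒳 → ℝ := distOf P X with hq
  set p : ℝ := ∑ ω ∈ Finset.univ.filter (fun ω => X ω ≠ x₀), P ω with hp
  have hM1 : (1 : ℝ) ≤ (M : ℝ) - 1 := by
    have : (2 : ℝ) ≤ (M : ℝ) := by exact_mod_cast hcard
    linarith
  have hM1' : (M : ℝ) - 1 ≠ 0 := by linarith
  -- basic facts about q
  have hq_nonneg : ∀ a, 0 ≤ q a := fun a => Finset.sum_nonneg fun ω _ => hP ω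
  have hq_sum : ∑ a, q a = 1 := by
    rw [← hPsum]
    exact Finset.sum_fiberwise_of_maps_to (fun ω _ => Finset.mem_univ (X ω)) P
  have hsplit : q x₀ + p = 1 := by
    rw [hq, hp, distOf, ← hPsum]
    exact Finset.sum_filter_add_sum_filter_not _ _ _
  have hp_nonneg : 0 ≤ p := Finset.sum_nonneg fun ω _ => hP ω
  have hp_le1 : p ≤ 1 := by have := hq_nonneg x₀; linarith
  have hp_erase : ∑ a ∈ Finset.univ.erase x₀, q a = p := by
    have := Finset.add_sum_erase Finset.univ q (Finset.mem_univ x₀)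
    rw [hq_sum] at this
    linarith
  -- the reference distribution r
  set r : 𝒳 → ℝ := fun a => if a = x₀ then 1 - p else p / ((M : ℝ) - 1) with hr
  have hr_nonneg : ∀ a, 0 ≤ r a := by
    intro a
    by_cases h : a = x₀ <;> simp [hr, h]
    · linarith
    · positivity
  have hcard_erase : (Finset.univ.erase x₀).card = M - 1 := by
    rw [Finset.card_erase_of_mem (Finset.mem_univ x₀), Finset.card_univ]
  have hr_sum : ∑ a, r a = 1 := by
    rw [← Finset.add_sum_erase Finset.univ r (Finset.mem_univ x₀)]
    have h2 : ∑ a ∈ Finset.univ.erase x₀, r a = ((M : ℝ) - 1) * (p / ((M : ℝ) - 1)) := by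
      have h2a : ∑ a ∈ Finset.univ.erase x₀, r a
          = ∑ _a ∈ Finset.univ.erase x₀, p / ((M : ℝ) - 1) :=
        Finset.sum_congr rfl fun a ha => by simp [hr, (Finset.mem_erase.mp ha).1]
      rw [h2a, Finset.sum_const, hcard_erase, nsmul_eq_mul]
      congr 1
      have hM1nat : 1 ≤ M := le_trans (by norm_num) hcard
      push_cast [Nat.cast_sub hM1nat]
      ring
    rw [h2]
    field_simp [hr]
    simp [hr]
  have hr_zero : ∀ a, r a = 0 → q a = 0 := by
    intro a ha
    by_cases h : a = x₀
    · simp [hr, h] at ha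
      subst h
      linarith
    · simp [hr, h] at ha
      rcases ha with ha | ha
      · -- p = 0, so all q a with a ≠ x₀ vanish
        have hle : q a ≤ p := hp_erase ▸
          Finset.single_le_sum (fun b _ => hq_nonneg b)
            (Finset.mem_erase.mpr ⟨h, Finset.mem_univ a⟩)
        have := hq_nonneg a
        linarith
      · exact absurd ha hM1'
  -- Gibbs' inequality
  have gibbs : ∑ a, q a * Real.log (q a) ≥ ∑ a, q a * Real.log (r a) := by
    have h1 : ∑ a, (q a * Real.log (r a) - q a * Real.log (q a)) ≤ ∑ a, (r a - q a) :=
      Finset.sum_le_sum fun a _ => gibbs_term (hq_nonneg a) (hr_nonneg a) (hr_zero a)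
    rw [Finset.sum_sub_distrib, Finset.sum_sub_distrib, hr_sum, hq_sum] at h1
    linarith
  -- compute the r-side
  have hrside : ∑ a, q a * Real.log (r a)
      = (1 - p) * Real.log (1 - p) + p * Real.log (p / ((M : ℝ) - 1)) := by
    rw [← Finset.add_sum_erase Finset.univ _ (Finset.mem_univ x₀)]
    have h2 : ∑ a ∈ Finset.univ.erase x₀, q a * Real.log (r a)
        = (∑ a ∈ Finset.univ.erase x₀, q a) * Real.log (p / ((M : ℝ) - 1)) := by
      rw [Finset.sum_mul]
      exact Finset.sum_congr rfl fun a ha => by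
        simp [hr, Finset.mem_erase.mp ha |>.1]
    rw [h2, hp_erase]
    have : q x₀ = 1 - p := by linarith
    simp [hr, this]
  -- Fano bound: entropy at most qaryEntropy M p (in nats)
  have hfano : -∑ a, q a * Real.log (q a) ≤ Real.qaryEntropy M p := by
    rw [qaryEntropy_expand]
    rcases eq_or_lt_of_le hp_nonneg with h0 | h0
    · rw [hrside] at gibbs
      rw [← h0] at gibbs ⊢
      simp at gibbs ⊢
      linarith
    · have hdiv : Real.log (p / ((M : ℝ) - 1)) = Real.log p - Real.log ((M : ℝ) - 1) :=
        Real.log_div h0.ne' hM1'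
      rw [hrside, hdiv] at gibbs
      nlinarith
  -- convert entOf to nats
  have hlog2 : (0 : ℝ) < Real.log 2 := Real.log_pos (by norm_num)
  have hent_eq : entOf P X = (-∑ a, q a * Real.log (q a)) / Real.log 2 := by
    rw [entOf]
    simp only [Real.logb]
    have h2a : ∑ a, distOf P X a * (Real.log (distOf P X a) / Real.log 2)
        = ∑ a, q a * Real.log (q a) / Real.log 2 :=
      Finset.sum_congr rfl fun a _ => (mul_div_assoc _ _ _).symm
    rw [h2a, ← Finset.sum_div, neg_div]
  -- the hypothesis gives qaryEntropy M δ ≤ log 2 * entOf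
  have hhyp : Real.qaryEntropy M δ ≤ Real.qaryEntropy M p := by
    have hδside : (-δ * Real.logb 2 δ - (1 - δ) * Real.logb 2 (1 - δ))
        + δ * Real.logb 2 ((M : ℝ) - 1) = Real.qaryEntropy M δ / Real.log 2 := by
      rw [qaryEntropy_expand]
      simp only [Real.logb]
      field_simp
      ring
    rw [hδside, hent_eq] at hent
    have h3 : Real.qaryEntropy M δ / Real.log 2 ≤ Real.qaryEntropy M p / Real.log 2 :=
      le_trans hent (by gcongr)
    have h4 := mul_le_mul_of_nonneg_right h3 hlog2.le
    rwa [div_mul_cancel₀ _ hlog2.ne', div_mul_cancel₀ _ hlog2.ne'] at h4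
  -- monotonicity concludes
  by_contra hcon
  push_neg at hcon
  have hmono := Real.qaryEntropy_strictMonoOn (q := M) hcard
  have hpmem : p ∈ Set.Icc (0 : ℝ) (1 - 1 / (M : ℝ)) :=
    ⟨hp_nonneg, by linarith⟩
  have hδmem : δ ∈ Set.Icc (0 : ℝ) (1 - 1 / (M : ℝ)) :=
    ⟨hδ0.le, hδ1⟩
  exact absurd (hmono hpmem hδmem hcon) (not_lt.mpr hhyp)
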